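/- For fixed squarefree D, if the Pell–Abel equation P² - D·Q² = 1 admits a nontrivial solution, and (P₀,Q₀) is a solution of minimal positive degree n, then every solution P of positive degree has degree a multiple of n. -/

import Mathlib

open Polynomial

/-- If the Pell–Abel equation for a squarefree `D` of degree `2g+2`, `g ≥ 1`, admits a
nontrivial solution `(P₀,Q₀)` of minimal positive degree `n`, then every solution of
positive degree has degree a multiple of `n`. -/
theorem pellAbel_degrees_multiples_of_primitive (g n : ℕ) (hg : 1 ≤ g)
    (D P₀ Q₀ : Polynomial ℂ) (hDsf : Squarefree D) (hDdeg : D.natDegree = 2 * g + 2)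
    (h₀ : P₀ ^ 2 - D * Q₀ ^ 2 = 1) (hn : P₀.natDegree = n) (hnpos : 0 < n)
    (hmin : ∀ P Q : Polynomial ℂ, P ^ 2 - D * Q ^ 2 = 1 → 0 < P.natDegree →
      n ≤ P.natDegree) :
    ∀ P Q : Polynomial ℂ, P ^ 2 - D * Q ^ 2 = 1 → 0 < P.natDegree →
      n ∣ P.natDegree := by
  have hD0 : D ≠ 0 := by
    intro hD; rw [hD, natDegree_zero] at hDdeg; omega
  have hP₀0 : P₀ ≠ 0 := by
    intro hP; rw [hP, natDegree_zero] at hn; omega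
  have hDQ₀ : (D * Q₀ ^ 2).natDegree = 2 * n := by
    have e : D * Q₀ ^ 2 = P₀ ^ 2 - C 1 := by rw [map_one]; linear_combination -h₀
    rw [e, natDegree_sub_C, natDegree_pow, hn]
  have hQ₀0 : Q₀ ≠ 0 := by
    intro hQ; rw [hQ] at hDQ₀; simp at hDQ₀; omega
  have hQ₀deg : D.natDegree + 2 * Q₀.natDegree = 2 * n := by
    rw [natDegree_mul hD0 (pow_ne_zero 2 hQ₀0), natDegree_pow] at hDQ₀; omega
  suffices H : ∀ m : ℕ, ∀ P Q : Polynomial ℂ, P.natDegree = m →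
      P ^ 2 - D * Q ^ 2 = 1 → 0 < m → n ∣ m by
    intro P Q h hpos
    exact H P.natDegree P Q rfl h hpos
  intro m
  induction m using Nat.strong_induction_on with
  | _ m ih =>
  intro P Q hm h hpos
  have hge : n ≤ m := by
    have := hmin P Q h (by omega : 0 < P.natDegree)
    omega
  rcases eq_or_lt_of_le hge with heq | hlt
  · exact heq ▸ dvd_refl n
  have hP0 : P ≠ 0 := by
    intro hP; rw [hP, natDegree_zero] at hm; omega
  have hDQ : (D * Q ^ 2).natDegree = 2 * m := by
    have e : D * Q ^ 2 = P ^ 2 - C 1 := by rw [map_one]; linear_combination -h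
    rw [e, natDegree_sub_C, natDegree_pow, hm]
  have hQ0 : Q ≠ 0 := by
    intro hQ; rw [hQ] at hDQ; simp at hDQ; omega
  have hQdeg : D.natDegree + 2 * Q.natDegree = 2 * m := by
    rw [natDegree_mul hD0 (pow_ne_zero 2 hQ0), natDegree_pow] at hDQ; omega
  set A := P * P₀ - D * Q * Q₀ with hA
  set B := P * P₀ + D * Q * Q₀ with hB
  have hABeq : A * B = P ^ 2 + D * Q₀ ^ 2 := by
    rw [hA, hB]; linear_combination P ^ 2 * h₀ + D * Q₀ ^ 2 * h
  have hsum : P ^ 2 + D * Q₀ ^ 2 ≠ 0 := by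
    intro h0
    have hu : D * (-(Q ^ 2 + Q₀ ^ 2)) = 1 := by linear_combination h - h0
    have := natDegree_eq_zero_of_isUnit (IsUnit.of_mul_eq_one (a := D) _ hu)
    omega
  have hABne : A * B ≠ 0 := hABeq ▸ hsum
  have hAne : A ≠ 0 := left_ne_zero_of_mul hABne
  have hBne : B ≠ 0 := right_ne_zero_of_mul hABne
  have hdegsum : A.natDegree + B.natDegree = 2 * m := by
    rw [← natDegree_mul hAne hBne, hABeq]
    have h1 : (P ^ 2).natDegree = 2 * m := by rw [natDegree_pow, hm]
    have h2 : (D * Q₀ ^ 2).natDegree < (P ^ 2).natDegree := by omega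
    rw [natDegree_add_eq_left_of_natDegree_lt h2, h1]
  have hPP₀ : (P * P₀).natDegree = m + n := by
    rw [natDegree_mul hP0 hP₀0, hm, hn]
  have hDQQ₀ : (D * Q * Q₀).natDegree = m + n := by
    rw [natDegree_mul (mul_ne_zero hD0 hQ0) hQ₀0, natDegree_mul hD0 hQ0]
    omega
  have hAle : A.natDegree ≤ m + n := by
    rw [hA]
    exact le_trans (natDegree_sub_le _ _) (by simp [hPP₀, hDQQ₀])
  have hBle : B.natDegree ≤ m + n := by
    rw [hB]
    exact le_trans (natDegree_add_le _ _) (by simp [hPP₀, hDQQ₀])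
  have hmaxge : m + n ≤ max A.natDegree B.natDegree := by
    have hAB2 : A + B = C 2 * (P * P₀) := by
      rw [hA, hB]
      have : (C 2 : Polynomial ℂ) = 2 := map_ofNat C 2
      rw [this]; ring
    have hd : (A + B).natDegree = m + n := by
      rw [hAB2, natDegree_C_mul (by norm_num : (2 : ℂ) ≠ 0), hPP₀]
    calc m + n = (A + B).natDegree := hd.symm
      _ ≤ max A.natDegree B.natDegree := natDegree_add_le _ _
  have key : ∀ R S : Polynomial ℂ, R.natDegree = m - n → R ^ 2 - D * S ^ 2 = 1 →
      n ∣ m := by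
    intro R S hR hRS
    obtain ⟨k, hk⟩ := ih (m - n) (by omega) R S hR hRS (by omega)
    exact ⟨k + 1, by rw [Nat.mul_succ, ← hk]; omega⟩
  rcases le_max_iff.mp hmaxge with hc | hc
  · have hAdeg : A.natDegree = m + n := le_antisymm hAle hc
    refine key B (P * Q₀ + Q * P₀) (by omega) ?_
    rw [hB]; linear_combination (P₀ ^ 2 - D * Q₀ ^ 2) * h + h₀
  · have hBdeg : B.natDegree = m + n := le_antisymm hBle hc
    refine key A (P * Q₀ - Q * P₀) (by omega) ?_
    rw [hA]; linear_combination (P₀ ^ 2 - D * Q₀ ^ 2) * h + h₀
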